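/- Let A be a semilattice of groups. The set iend(A) of relatively invertible endomorphisms of A forms an inverse subsemigroup of End(A), isomorphic to the inverse semigroup of isomorphisms between unital ideals of A (where φ ∈ iend(A) corresponds to its restriction φ|_{e_φ A} : e_φ A → φ(e_φ)A). -/

import Mathlib

/-- An inverse semigroup structure: `iv` assigns to each element its unique
(generalized) inverse. -/
structure InvSemi (S : Type*) [Semigroup S] (iv : S → S) : Prop where
  rr : ∀ s, s * iv s * s = s
  ri : ∀ s, iv s * s * iv s = iv s
  uniq : ∀ s t, s * t * s = s → t * s * t = t → t = iv s

/-- A relatively invertible endomorphism of `A` (Lausch): there are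
`ψ ∈ End A` and an idempotent `e` with `ψ∘φ = e·`, `φ∘ψ = φ(e)·`, where `e` is
the identity of `ψ(A)` and `φ(e)` the identity of `φ(A)`. -/
def RelInv {A : Type*} [Semigroup A] (φ : A →ₙ* A) : Prop :=
  ∃ (ψ : A →ₙ* A) (e : A), IsIdempotentElem e ∧
    (∀ a, ψ (φ a) = e * a) ∧ (∀ a, φ (ψ a) = φ e * a) ∧
    (∀ a, e * ψ a = ψ a ∧ ψ a * e = ψ a) ∧
    (∀ a, φ e * φ a = φ a ∧ φ a * φ e = φ a)

/-- A partial bijection of `A` which is an isomorphism between two unital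
ideals `eA → fA` (with `e`, `f` central idempotents), encoded as a `PEquiv`
whose domain is `eA = {a | e * a = a}`, whose range is `fA`, and which is
multiplicative. -/
def IsUIdealIso {A : Type*} [Semigroup A] (χ : A ≃. A) : Prop :=
  (∃ e : A, IsIdempotentElem e ∧ (∀ a, e * a = a * e) ∧
    ∀ a, (χ.toFun a).isSome ↔ e * a = a) ∧
  (∃ f : A, IsIdempotentElem f ∧ (∀ a, f * a = a * f) ∧
    ∀ a, (χ.invFun a).isSome ↔ f * a = a) ∧
  (∀ a b c d : A, χ.toFun a = some c → χ.toFun b = some d →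
    χ.toFun (a * b) = some (c * d))

section
variable {A : Type*} [Semigroup A] {ivA : A → A}

theorem mulmul {e : A} (he : IsIdempotentElem e) (x : A) : e * (e * x) = e * x := by
  rw [← mul_assoc, he]

theorem iv_idem (hA : InvSemi A ivA) {e : A} (he : IsIdempotentElem e) : ivA e = e :=
  (hA.uniq e e (by rw [he, he]) (by rw [he, he])).symm

theorem iv_iv (hA : InvSemi A ivA) (a : A) : ivA (ivA a) = a :=
  (hA.uniq (ivA a) a (hA.ri a) (hA.rr a)).symm

theorem idem_comm (hA : InvSemi A ivA) {e f : A} (he : IsIdempotentElem e)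
    (hf : IsIdempotentElem f) : e * f = f * e := by
  have main : ∀ u v : A, IsIdempotentElem u → IsIdempotentElem v →
      IsIdempotentElem (u * v) := by
    intro u v hu hv
    set x := ivA (u * v) with hx
    have h1 : u * (v * (x * (u * v))) = u * v := by
      simpa [mul_assoc] using hA.rr (u * v)
    have h2 : ∀ z, x * (u * (v * (x * z))) = x * z := fun z => by
      simpa [mul_assoc] using congrArg (· * z) (hA.ri (u * v))
    set y := v * (x * u) with hy
    have hyi : IsIdempotentElem y := by
      show y * y = y
      rw [hy]; simp only [mul_assoc]; rw [h2 u]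
    have hin1 : (u * v) * y * (u * v) = u * v := by
      simp only [hy, mul_assoc, mulmul hu, mulmul hv]
      exact h1
    have hin2 : y * (u * v) * y = y := by
      simp only [hy, mul_assoc, mulmul hu, mulmul hv]
      rw [h2 u]
    have hyx : y = x := hA.uniq _ _ hin1 hin2
    have huv : u * v = ivA y :=
      hA.uniq y (u * v) (by rw [hyx]; exact hA.ri (u * v)) (by rw [hyx]; exact hA.rr (u * v))
    rw [huv, iv_idem hA hyi]; exact hyi
  have hef : IsIdempotentElem (e * f) := main e f he hf
  have hfe : IsIdempotentElem (f * e) := main f e hf he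
  have h1 : f * e = ivA (e * f) := by
    refine hA.uniq _ _ ?_ ?_
    · show e * f * (f * e) * (e * f) = e * f
      simp only [mul_assoc, mulmul he, mulmul hf]
      simpa [mul_assoc] using hef.eq
    · show f * e * (e * f) * (f * e) = f * e
      simp only [mul_assoc, mulmul he, mulmul hf]
      simpa [mul_assoc] using hfe.eq
  rw [h1, iv_idem hA hef]

theorem idem_mul (hA : InvSemi A ivA) {e f : A} (he : IsIdempotentElem e)
    (hf : IsIdempotentElem f) : IsIdempotentElem (e * f) := by
  show e * f * (e * f) = e * f
  have hc : ∀ z, f * (e * z) = e * (f * z) := fun z => by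
    simpa [mul_assoc] using congrArg (· * z) (idem_comm hA hf he)
  simp only [mul_assoc]
  rw [hc, mulmul he, hf.eq]

theorem idem_central (hA : InvSemi A ivA) (hCl : ∀ a : A, a * ivA a = ivA a * a)
    {e : A} (he : IsIdempotentElem e) (a : A) : e * a = a * e := by
  -- z-extended versions
  have hEi : ∀ b : A, IsIdempotentElem (b * ivA b) := fun b => by
    show b * ivA b * (b * ivA b) = b * ivA b
    rw [← mul_assoc, hA.rr]
  -- the key identity: e * (b * b') = b' * (e * b) for all b
  have claim1 : ∀ b, ivA (e * b) = ivA b * e := by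
    intro b
    set b' := ivA b with hb'
    have hcomEb : ∀ z, b * (b' * (e * z)) = e * (b * (b' * z)) := fun z => by
      simpa [mul_assoc] using congrArg (· * z) (idem_comm hA (hEi b) he)
    have hrrz : ∀ z, b * (b' * (b * z)) = b * z := fun z => by
      simpa [mul_assoc] using congrArg (· * z) (hA.rr b)
    have hriz : ∀ z, b' * (b * (b' * z)) = b' * z := fun z => by
      simpa [mul_assoc] using congrArg (· * z) (hA.ri b)
    have hrr' : b * (b' * b) = b := by simpa [mul_assoc] using hA.rr b
    refine (hA.uniq _ _ ?_ ?_).symm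
    · show e * b * (b' * e) * (e * b) = e * b
      simp only [mul_assoc, mulmul he]
      rw [hcomEb b, mulmul he, hrr']
    · show b' * e * (e * b) * (b' * e) = b' * e
      simp only [mul_assoc, mulmul he]
      rw [← hcomEb e, he.eq, hriz e]
  have key : ∀ b, e * (b * ivA b) = ivA b * (e * b) := by
    intro b
    set b' := ivA b with hb'
    have h := hCl (e * b)
    rw [claim1 b] at h
    have cEb : e * (b * b') = b * b' * e := idem_comm hA he (hEi b)
    have h2 : e * b * (b' * e) = e * (b * b') := by
      rw [mul_assoc, ← mul_assoc b b' e, ← mul_assoc e, cEb, mul_assoc, he.eq, ← cEb]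
    have h3 : b' * e * (e * b) = b' * (e * b) := by
      rw [mul_assoc, ← mul_assoc e e, he.eq]
    rw [h2, h3] at h
    exact h
  set a' := ivA a with ha'
  have hE' : IsIdempotentElem (a' * a) := by rw [← hCl a]; exact hEi a
  have hcomE : ∀ z, a * (a' * (e * z)) = e * (a * (a' * z)) := fun z => by
    simpa [mul_assoc] using congrArg (· * z) (idem_comm hA (hEi a) he)
  have hz1 : ∀ z, a * (a' * (a * z)) = a * z := fun z => by
    simpa [mul_assoc] using congrArg (· * z) (hA.rr a)
  have hrr' : a * (a' * a) = a := by simpa [mul_assoc] using hA.rr a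
  have hcome' : a' * a * e = e * (a' * a) := idem_comm hA hE' he
  calc e * a = e * (a * (a' * a)) := by rw [hrr']
    _ = a * (a' * (e * a)) := (hcomE a).symm
    _ = a * (e * (a * a')) := by rw [key a]
    _ = a * (e * (a' * a)) := by rw [hCl a]
    _ = a * (a' * a * e) := by rw [hcome']
    _ = a * (a' * (a * e)) := by rw [mul_assoc]
    _ = a * e := hz1 e

end

section Aux
variable {A : Type*} [Semigroup A]

def RData (φ ψ : A →ₙ* A) (e : A) : Prop :=
  IsIdempotentElem e ∧
    (∀ a, ψ (φ a) = e * a) ∧ (∀ a, φ (ψ a) = φ e * a) ∧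
    (∀ a, e * ψ a = ψ a ∧ ψ a * e = ψ a) ∧
    (∀ a, φ e * φ a = φ a ∧ φ a * φ e = φ a)

theorem relInv_iff {φ : A →ₙ* A} : RelInv φ ↔ ∃ ψ e, RData φ ψ e := Iff.rfl

noncomputable def RelInv.psi {φ : A →ₙ* A} (h : RelInv φ) : A →ₙ* A := h.choose

noncomputable def RelInv.idm {φ : A →ₙ* A} (h : RelInv φ) : A := h.choose_spec.choose

theorem RelInv.rdata {φ : A →ₙ* A} (h : RelInv φ) : RData φ h.psi h.idm :=
  h.choose_spec.choose_spec

theorem RData.idm_idem {φ ψ : A →ₙ* A} {e : A} (h : RData φ ψ e) :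
    IsIdempotentElem e := h.1

theorem RData.idem_map {φ ψ : A →ₙ* A} {e : A} (h : RData φ ψ e) :
    IsIdempotentElem (φ e) := by
  show φ e * φ e = φ e
  rw [← map_mul, h.1.eq]

theorem idem_map' {φ : A →ₙ* A} {e : A} (he : IsIdempotentElem e) :
    IsIdempotentElem (φ e) := by
  show φ e * φ e = φ e
  rw [← map_mul, he.eq]

theorem idem_mul' (ctr : ∀ {e : A}, IsIdempotentElem e → ∀ a, e * a = a * e) {e f : A} (he : IsIdempotentElem e) (hf : IsIdempotentElem f) :
    IsIdempotentElem (e * f) := by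
  show e * f * (e * f) = e * f
  rw [mul_assoc, ← mul_assoc f e f, ← ctr he f, mul_assoc e f f, hf.eq, mulmul he]

theorem rdata_unique (ctr : ∀ {e : A}, IsIdempotentElem e → ∀ a, e * a = a * e) {φ ψ₁ ψ₂ : A →ₙ* A} {e₁ e₂ : A}
    (h1 : RData φ ψ₁ e₁) (h2 : RData φ ψ₂ e₂) : ψ₁ = ψ₂ ∧ e₁ = e₂ := by
  obtain ⟨he1, hc1, hd1, hi1, hj1⟩ := h1
  obtain ⟨he2, hc2, hd2, hi2, hj2⟩ := h2
  have hf1 : IsIdempotentElem (φ e₁) := idem_map' he1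
  have hfe : φ e₁ = φ e₂ := by
    calc φ e₁ = φ e₂ * φ e₁ := ((hj2 e₁).1).symm
      _ = φ e₁ * φ e₂ := (ctr hf1 (φ e₂)).symm
      _ = φ e₂ := (hj1 e₂).1
  have hee : e₁ = e₂ := by
    have a1 : e₁ * e₂ = e₁ := by
      calc e₁ * e₂ = ψ₁ (φ e₂) := (hc1 e₂).symm
        _ = ψ₁ (φ e₁) := by rw [hfe]
        _ = e₁ * e₁ := hc1 e₁
        _ = e₁ := he1.eq
    have a2 : e₂ * e₁ = e₂ := by
      calc e₂ * e₁ = ψ₂ (φ e₁) := (hc2 e₁).symm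
        _ = ψ₂ (φ e₂) := by rw [hfe]
        _ = e₂ * e₂ := hc2 e₂
        _ = e₂ := he2.eq
    calc e₁ = e₁ * e₂ := a1.symm
      _ = e₂ * e₁ := ctr he1 e₂
      _ = e₂ := a2
  refine ⟨MulHom.ext fun a => ?_, hee⟩
  calc ψ₁ a = e₁ * ψ₁ a := ((hi1 a).1).symm
    _ = e₂ * ψ₁ a := by rw [hee]
    _ = ψ₂ (φ (ψ₁ a)) := (hc2 (ψ₁ a)).symm
    _ = ψ₂ (φ e₁ * a) := by rw [hd1 a]
    _ = ψ₂ (φ e₂ * a) := by rw [hfe]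
    _ = ψ₂ (φ e₂) * ψ₂ a := map_mul ψ₂ _ _
    _ = e₂ * e₂ * ψ₂ a := by rw [hc2 e₂]
    _ = e₂ * ψ₂ a := by rw [he2.eq]
    _ = ψ₂ a := (hi2 a).1

theorem rdata_comp (ctr : ∀ {e : A}, IsIdempotentElem e → ∀ a, e * a = a * e) {φ ψ p q : A →ₙ* A} {u v : A}
    (hφ : RData φ p u) (hψ : RData ψ q v) :
    RData (φ.comp ψ) (q.comp p) (q u * v) := by
  obtain ⟨hu, hc, hd, hi, hj⟩ := hφ
  obtain ⟨hv, qc, qd, qi, qj⟩ := hψ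
  have hqu : IsIdempotentElem (q u) := idem_map' hu
  have hX : IsIdempotentElem (φ (ψ v)) := idem_map' (idem_map' hv)
  have hY : IsIdempotentElem (φ u) := idem_map' hu
  have hw : IsIdempotentElem (q u * v) := idem_mul' ctr hqu hv
  -- value of the composite at the idempotent
  have hw' : φ (ψ (q u * v)) = φ (ψ v) * φ u := by
    calc φ (ψ (q u * v)) = φ (ψ (q u) * ψ v) := by rw [map_mul]
      _ = φ ((ψ v * u) * ψ v) := by rw [qd u]
      _ = φ (ψ v) * φ u * φ (ψ v) := by rw [map_mul, map_mul]
      _ = φ (ψ v) * (φ u * φ (ψ v)) := mul_assoc _ _ _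
      _ = φ (ψ v) * (φ (ψ v) * φ u) := by rw [ctr hY (φ (ψ v))]
      _ = φ (ψ v) * φ u := mulmul hX _
  refine ⟨hw, ?_, ?_, ?_, ?_⟩
  · intro a
    show q (p (φ (ψ a))) = q u * v * a
    rw [hc (ψ a), map_mul, qc a, ← mul_assoc]
  · intro a
    show φ (ψ (q (p a))) = φ (ψ (q u * v)) * a
    calc φ (ψ (q (p a))) = φ (ψ v * p a) := by rw [qd]
      _ = φ (ψ v) * φ (p a) := map_mul φ _ _
      _ = φ (ψ v) * (φ u * a) := by rw [hd]
      _ = φ (ψ v) * φ u * a := (mul_assoc _ _ _).symm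
      _ = φ (ψ (q u * v)) * a := by rw [hw']
  · intro a
    constructor
    · show q u * v * q (p a) = q (p a)
      rw [mul_assoc, (qi (p a)).1, ← map_mul, (hi a).1]
    · show q (p a) * (q u * v) = q (p a)
      rw [← ctr hw (q (p a)), mul_assoc, (qi (p a)).1, ← map_mul, (hi a).1]
  · intro a
    have k1 : φ (ψ (q u * v)) * φ (ψ a) = φ (ψ a) := by
      rw [hw', mul_assoc, (hj (ψ a)).1, ← map_mul, (qj a).1]
    constructor
    · exact k1
    · show φ (ψ a) * φ (ψ (q u * v)) = φ (ψ a)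
      have hwid : IsIdempotentElem (φ (ψ (q u * v))) := by
        rw [hw']; exact idem_mul' ctr hX hY
      rw [← ctr hwid (φ (ψ a))]; exact k1

end Aux

section PE
variable {A : Type*} [Semigroup A]

open Classical in
/-- restriction of a relatively invertible endomorphism to its domain ideal -/
noncomputable def toPE (φ : A →ₙ* A) (h : RelInv φ) : A ≃. A where
  toFun a := if h.idm * a = a then some (φ a) else none
  invFun b := if φ h.idm * b = b then some (h.psi b) else none
  inv a b := by
    obtain ⟨he, hc, hd, hi, hj⟩ := h.rdata
    split_ifs with h1 h2 h2
    · constructor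
      · rintro h'
        have : h.psi b = a := by injection h'
        subst this
        rw [hd b, h1]
      · rintro h'
        have : φ a = b := by injection h'
        subst this
        rw [hc a, h2]
    · constructor
      · rintro h'
        have hba : h.psi b = a := by injection h'
        exact absurd (hba ▸ (hi b).1) h2
      · rintro h'; exact absurd h' (by simp)
    · constructor
      · rintro h'; exact absurd h' (by simp)
      · rintro h'
        have hab : φ a = b := by injection h'
        exact absurd (hab ▸ (hj a).1) h1
    · simp

open Classical in
theorem toPE_toFun (φ : A →ₙ* A) (h : RelInv φ) (a : A) :
    (toPE φ h).toFun a = if h.idm * a = a then some (φ a) else none := by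
  simp [toPE]

open Classical in
theorem toPE_invFun (φ : A →ₙ* A) (h : RelInv φ) (b : A) :
    (toPE φ h).invFun b = if φ h.idm * b = b then some (h.psi b) else none := by
  simp [toPE]

theorem toPE_congr {φ₁ φ₂ : A →ₙ* A} (h : φ₁ = φ₂) (h₁ : RelInv φ₁) (h₂ : RelInv φ₂) :
    toPE φ₁ h₁ = toPE φ₂ h₂ := by subst h; rfl

open Classical in
theorem toPE_some {φ : A →ₙ* A} (h : RelInv φ) {a b : A}
    (hs : (toPE φ h).toFun a = some b) : b = φ a := by
  rw [toPE_toFun] at hs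
  split_ifs at hs
  injection hs
  exact (by assumption : φ a = b).symm

theorem toPE_inj (ctr : ∀ {e : A}, IsIdempotentElem e → ∀ a, e * a = a * e)
    {φ₁ φ₂ : A →ₙ* A} (h₁ : RelInv φ₁) (h₂ : RelInv φ₂)
    (h : toPE φ₁ h₁ = toPE φ₂ h₂) : φ₁ = φ₂ := by
  obtain ⟨he1, hc1, hd1, hi1, hj1⟩ := h₁.rdata
  obtain ⟨he2, hc2, hd2, hi2, hj2⟩ := h₂.rdata
  have hfun : ∀ a, (toPE φ₁ h₁).toFun a = (toPE φ₂ h₂).toFun a := fun a => by rw [h]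
  have key : ∀ a : A, h₁.idm * a = a →
      h₂.idm * a = a ∧ φ₁ a = φ₂ a := by
    intro a ha
    have := hfun a
    rw [toPE_toFun, toPE_toFun, if_pos ha] at this
    by_cases hcond : h₂.idm * a = a
    · rw [if_pos hcond] at this
      exact ⟨hcond, by injection this⟩
    · rw [if_neg hcond] at this
      exact absurd this (by simp)
  have key2 : ∀ a : A, h₂.idm * a = a → h₁.idm * a = a := by
    intro a ha
    have := hfun a
    rw [toPE_toFun, toPE_toFun, if_pos ha] at this
    by_cases hcond : h₁.idm * a = a
    · exact hcond
    · rw [if_neg hcond] at this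
      exact absurd this.symm (by simp)
  have hee : h₁.idm = h₂.idm := by
    have a1 : h₂.idm * h₁.idm = h₁.idm := (key h₁.idm he1.eq).1
    have a2 : h₁.idm * h₂.idm = h₂.idm := key2 h₂.idm he2.eq
    calc h₁.idm = h₂.idm * h₁.idm := a1.symm
      _ = h₁.idm * h₂.idm := (ctr he1 h₂.idm).symm
      _ = h₂.idm := a2
  refine MulHom.ext fun a => ?_
  have hval : φ₁ (h₁.idm * a) = φ₂ (h₁.idm * a) :=
    (key (h₁.idm * a) (mulmul he1 a)).2
  calc φ₁ a = φ₁ h₁.idm * φ₁ a := ((hj1 a).1).symm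
    _ = φ₁ (h₁.idm * a) := (map_mul φ₁ _ _).symm
    _ = φ₂ (h₁.idm * a) := hval
    _ = φ₂ (h₂.idm * a) := by rw [hee]
    _ = φ₂ h₂.idm * φ₂ a := map_mul φ₂ _ _
    _ = φ₂ a := (hj2 a).1

end PE

section PE2
variable {A : Type*} [Semigroup A]

theorem relInv_comp (ctr : ∀ {e : A}, IsIdempotentElem e → ∀ a, e * a = a * e)
    {φ ψ : A →ₙ* A} (hφ : RelInv φ) (hψ : RelInv ψ) : RelInv (φ.comp ψ) :=
  ⟨_, _, rdata_comp ctr hφ.rdata hψ.rdata⟩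

theorem trans_apply' {α : Type*} (f g : α ≃. α) (a : α) :
    (f.trans g) a = (f a).bind g := rfl

theorem toPE_comp (ctr : ∀ {e : A}, IsIdempotentElem e → ∀ a, e * a = a * e)
    {φ ψ : A →ₙ* A} (hφ : RelInv φ) (hψ : RelInv ψ) (hc : RelInv (φ.comp ψ)) :
    toPE (φ.comp ψ) hc = (toPE ψ hψ).trans (toPE φ hφ) := by
  obtain ⟨hu, hcc, hd, hi, hj⟩ := hφ.rdata
  obtain ⟨hv, qc, qd, qi, qj⟩ := hψ.rdata
  obtain ⟨-, hw⟩ := rdata_unique ctr hc.rdata (rdata_comp ctr hφ.rdata hψ.rdata)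
  set u := hφ.idm
  set v := hψ.idm
  set q := hψ.psi
  have hqu : IsIdempotentElem (q u) := idem_map' hu
  have hiff : ∀ a : A, hc.idm * a = a ↔ (v * a = a ∧ u * ψ a = ψ a) := by
    intro a
    rw [hw]
    constructor
    · intro h
      have h' : q u * (v * a) = a := by rw [← mul_assoc]; exact h
      have hva : v * a = a := by
        conv_lhs => rw [← h']
        rw [← mul_assoc, ← ctr hqu v, mul_assoc, mulmul hv, h']
      refine ⟨hva, ?_⟩
      have ha2 : ψ a = ψ v * (u * ψ a) := by
        calc ψ a = ψ (q u * (v * a)) := by rw [h']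
          _ = ψ (q u) * ψ (v * a) := map_mul ψ _ _
          _ = (ψ v * u) * ψ (v * a) := by rw [qd]
          _ = (ψ v * u) * ψ a := by rw [hva]
          _ = ψ v * (u * ψ a) := mul_assoc _ _ _
      conv_lhs => rw [ha2]
      rw [← mul_assoc, ctr hu (ψ v), mul_assoc, mulmul hu, ← ha2]
    · rintro ⟨hva, hua⟩
      have h3 : q u * a = a := by
        have h4 := congrArg q hua
        rw [map_mul, qc, hva] at h4
        exact h4
      rw [mul_assoc, hva, h3]
  refine PEquiv.ext fun a => ?_
  show (toPE (φ.comp ψ) hc).toFun a = ((toPE ψ hψ).toFun a).bind (toPE φ hφ).toFun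
  rw [toPE_toFun, toPE_toFun]
  by_cases h1 : v * a = a
  · rw [if_pos h1, Option.bind_some]
    show _ = (toPE φ hφ).toFun (ψ a)
    rw [toPE_toFun]
    by_cases h2 : u * ψ a = ψ a
    · rw [if_pos ((hiff a).mpr ⟨h1, h2⟩), if_pos h2]
      rfl
    · rw [if_neg (fun hcon => h2 ((hiff a).mp hcon).2), if_neg h2]
  · rw [if_neg (fun hcon => h1 ((hiff a).mp hcon).1), if_neg h1, Option.bind_none]

theorem toPE_isUIdealIso (ctr : ∀ {e : A}, IsIdempotentElem e → ∀ a, e * a = a * e)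
    {φ : A →ₙ* A} (h : RelInv φ) : IsUIdealIso (toPE φ h) := by
  obtain ⟨he, hc, hd, hi, hj⟩ := h.rdata
  refine ⟨⟨h.idm, he, ctr he, ?_⟩, ⟨φ h.idm, idem_map' he, ctr (idem_map' he), ?_⟩, ?_⟩
  · intro a
    rw [toPE_toFun]
    by_cases hcond : h.idm * a = a
    · simp [hcond]
    · simp [hcond]
  · intro a
    rw [toPE_invFun]
    by_cases hcond : φ h.idm * a = a
    · simp [hcond]
    · simp [hcond]
  · intro a b c d hac hbd
    rw [toPE_toFun] at hac hbd
    have ha : h.idm * a = a := by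
      by_contra hn; rw [if_neg hn] at hac; exact absurd hac (by simp)
    have hb : h.idm * b = b := by
      by_contra hn; rw [if_neg hn] at hbd; exact absurd hbd (by simp)
    rw [if_pos ha] at hac
    rw [if_pos hb] at hbd
    have hac' : φ a = c := by injection hac
    have hbd' : φ b = d := by injection hbd
    have hab : h.idm * (a * b) = a * b := by rw [← mul_assoc, ha]
    rw [toPE_toFun, if_pos hab, map_mul, hac', hbd']

theorem pequiv_uniq {α : Type*} {X T : α ≃. α}
    (h1 : (X.trans T).trans X = X) (h2 : (T.trans X).trans T = T) : T = X.symm := by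
  refine PEquiv.ext fun b => ?_
  cases hX : X.symm b with
  | some a =>
    have hXa : X a = some b := X.eq_some_iff.mp hX
    have e1 : ((X a).bind T).bind X = X a := by
      have := DFunLike.congr_fun h1 a
      rwa [trans_apply', trans_apply'] at this
    rw [hXa, Option.bind_some] at e1
    obtain ⟨c, hTc, hXc⟩ := Option.bind_eq_some_iff.mp e1
    have hcc : X.symm b = some c := X.eq_some_iff.mpr hXc
    rw [hX] at hcc
    have : a = c := by injection hcc
    rw [hTc, ← this]
  | none =>
    cases hT : T b with
    | none => rfl
    | some c =>
      exfalso
      have e2 : ((T b).bind X).bind T = T b := by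
        have := DFunLike.congr_fun h2 b
        rwa [trans_apply', trans_apply'] at this
      rw [hT, Option.bind_some] at e2
      obtain ⟨d, hXd, hTd⟩ := Option.bind_eq_some_iff.mp e2
      have hb : T.symm c = some b := T.eq_some_iff.mpr hT
      have hd : T.symm c = some d := T.eq_some_iff.mpr hTd
      rw [hb] at hd
      have hbd : b = d := by injection hd
      subst hbd
      have : X.symm b = some c := X.eq_some_iff.mpr hXd
      rw [hX] at this
      exact absurd this (by simp)

end PE2

section PE3
variable {A : Type*} [Semigroup A]

theorem toPE_surj (ctr : ∀ {e : A}, IsIdempotentElem e → ∀ a, e * a = a * e)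
    {χ : A ≃. A} (hχ : IsUIdealIso χ) :
    ∃ (φ : A →ₙ* A) (h : RelInv φ), toPE φ h = χ := by
  obtain ⟨⟨e, he, hec, hd⟩, ⟨f, hf, hfc, hr⟩, hmult⟩ := hχ
  -- basic transfer facts
  have F1 : ∀ {a c : A}, χ.toFun a = some c → f * c = c := by
    intro a c hc
    have hmem : a ∈ χ.invFun c := (χ.inv a c).mpr hc
    rw [Option.mem_def] at hmem
    exact (hr c).mp (by rw [hmem]; rfl)
  have F2 : ∀ {b a : A}, χ.invFun b = some a → e * a = a := by
    intro b a hb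
    have hmem : b ∈ χ.toFun a := (χ.inv a b).mp hb
    rw [Option.mem_def] at hmem
    exact (hd a).mp (by rw [hmem]; rfl)
  have FD : ∀ {a b : A}, χ.toFun a = some b → χ.invFun b = some a := by
    intro a b hab
    have hmem : a ∈ χ.invFun b := (χ.inv a b).mpr hab
    rwa [Option.mem_def] at hmem
  have FI : ∀ {b a : A}, χ.invFun b = some a → χ.toFun a = some b := by
    intro b a hab
    have hmem : b ∈ χ.toFun a := (χ.inv a b).mp hab
    rwa [Option.mem_def] at hmem
  have hmultInv : ∀ {b d a c : A}, χ.invFun b = some a → χ.invFun d = some c →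
      χ.invFun (b * d) = some (a * c) := by
    intro b d a c h1 h2
    exact FD (hmult a c b d (FI h1) (FI h2))
  -- the underlying functions
  set φfun : A → A := fun a => (χ.toFun (e * a)).get ((hd _).mpr (mulmul he a)) with hφdef
  set ψfun : A → A := fun b => (χ.invFun (f * b)).get ((hr _).mpr (mulmul hf b)) with hψdef
  have hφval : ∀ a, χ.toFun (e * a) = some (φfun a) := fun a => (Option.some_get _).symm
  have hψval : ∀ b, χ.invFun (f * b) = some (ψfun b) := fun b => (Option.some_get _).symm
  have heab : ∀ a b : A, (e * a) * (e * b) = e * (a * b) := by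
    intro a b
    rw [mul_assoc e a (e * b), ← mul_assoc a e b, ← hec a, mul_assoc e a b, mulmul he]
  have hfab : ∀ a b : A, (f * a) * (f * b) = f * (a * b) := by
    intro a b
    rw [mul_assoc f a (f * b), ← mul_assoc a f b, ← hfc a, mul_assoc f a b, mulmul hf]
  have hφmul : ∀ a b : A, φfun (a * b) = φfun a * φfun b := by
    intro a b
    have h3 := hmult _ _ _ _ (hφval a) (hφval b)
    rw [heab a b, hφval (a * b)] at h3
    injection h3
  have hψmul : ∀ a b : A, ψfun (a * b) = ψfun a * ψfun b := by
    intro a b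
    have h3 := hmultInv (hψval a) (hψval b)
    rw [hfab a b, hψval (a * b)] at h3
    injection h3
  set φ : A →ₙ* A := ⟨φfun, by intro a b; exact hφmul a b⟩ with hφh
  set ψ : A →ₙ* A := ⟨ψfun, by intro a b; exact hψmul a b⟩ with hψh
  -- χ e = some f
  have hge : χ.toFun e = some (φfun e) := by
    have := hφval e
    rwa [he.eq] at this
  have hgid : ∀ b, f * b = b → φfun e * b = b := by
    intro b hb
    obtain ⟨a, ha⟩ := Option.isSome_iff_exists.mp ((hr b).mpr hb)
    have hab' : χ.toFun a = some b := FI ha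
    have h3 := hmult _ _ _ _ hge hab'
    rw [F2 ha, hab'] at h3
    exact (by injection h3 : b = φfun e * b).symm
  have hgf : φfun e = f := by
    have u1 : f * φfun e = φfun e := F1 hge
    have u2 : φfun e * f = f := hgid f hf.eq
    calc φfun e = f * φfun e := u1.symm
      _ = φfun e * f := hfc (φfun e)
      _ = f := u2
  have hχe : χ.toFun e = some f := by rw [hge, hgf]
  -- the relative invertibility data
  have hdata : RData φ ψ e := by
    refine ⟨he, ?_, ?_, ?_, ?_⟩
    · intro a
      show ψfun (φfun a) = e * a
      have h1 : f * φfun a = φfun a := F1 (hφval a)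
      have h2 := hψval (φfun a)
      rw [h1, FD (hφval a)] at h2
      exact (by injection h2 : e * a = ψfun (φfun a)).symm
    · intro a
      show φfun (ψfun a) = φfun e * a
      rw [hgf]
      have h1 : e * ψfun a = ψfun a := F2 (hψval a)
      have h2 := hφval (ψfun a)
      rw [h1, FI (hψval a)] at h2
      exact (by injection h2 : f * a = φfun (ψfun a)).symm
    · intro a
      show e * ψfun a = ψfun a ∧ ψfun a * e = ψfun a
      have h1 : e * ψfun a = ψfun a := F2 (hψval a)
      exact ⟨h1, by rw [← hec (ψfun a)]; exact h1⟩
    · intro a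
      show φfun e * φfun a = φfun a ∧ φfun a * φfun e = φfun a
      rw [hgf]
      have h1 : f * φfun a = φfun a := F1 (hφval a)
      exact ⟨h1, by rw [← hfc (φfun a)]; exact h1⟩
  have hrel : RelInv φ := ⟨ψ, e, hdata⟩
  refine ⟨φ, hrel, ?_⟩
  obtain ⟨-, hidm⟩ := rdata_unique ctr hrel.rdata hdata
  refine PEquiv.ext fun a => ?_
  show (toPE φ hrel).toFun a = χ.toFun a
  rw [toPE_toFun, hidm]
  by_cases ha : e * a = a
  · rw [if_pos ha]
    have := hφval a
    rw [ha] at this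
    exact this.symm
  · rw [if_neg ha]
    have : ¬ (χ.toFun a).isSome := fun hs => ha ((hd a).mp hs)
    exact (Option.not_isSome_iff_eq_none.mp this).symm

end PE3

section Psi
variable {A : Type*} [Semigroup A]

theorem rdata_psi {φ : A →ₙ* A} (h : RelInv φ) : RData h.psi φ (φ h.idm) := by
  obtain ⟨he, hc, hd, hi, hj⟩ := h.rdata
  refine ⟨idem_map' he, hd, ?_, hj, ?_⟩
  · intro a
    rw [hc a, hc h.idm, he.eq]
  · intro a
    rw [hc h.idm, he.eq]
    exact hi a

theorem relInv_psi {φ : A →ₙ* A} (h : RelInv φ) : RelInv h.psi :=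
  ⟨φ, φ h.idm, rdata_psi h⟩

theorem comp_psi₁ {φ : A →ₙ* A} (h : RelInv φ) : φ.comp (h.psi.comp φ) = φ := by
  obtain ⟨he, hc, hd, hi, hj⟩ := h.rdata
  refine MulHom.ext fun a => ?_
  show φ (h.psi (φ a)) = φ a
  rw [hc a, map_mul]
  exact (hj a).1

theorem comp_psi₂ {φ : A →ₙ* A} (h : RelInv φ) : h.psi.comp (φ.comp h.psi) = h.psi := by
  obtain ⟨he, hc, hd, hi, hj⟩ := h.rdata
  refine MulHom.ext fun a => ?_
  show h.psi (φ (h.psi a)) = h.psi a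
  rw [hc (h.psi a)]
  exact (hi a).1

end Psi

/-- The relatively invertible endomorphisms of a semilattice of groups `A`
form an inverse subsemigroup of `End A`, isomorphic (via restriction
`φ ↦ φ|_{e_φ A}`) to the inverse semigroup of isomorphisms between unital
ideals of `A`, whose product is composition on the largest possible domain
(`PEquiv.trans`). -/
theorem stmt11 {A : Type*} [Semigroup A] (ivA : A → A) (hA : InvSemi A ivA)
    (hCl : ∀ a : A, a * ivA a = ivA a * a) :
    ∃ hclosed : ∀ φ ψ : A →ₙ* A, RelInv φ → RelInv ψ → RelInv (φ.comp ψ),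
    (∀ φ : A →ₙ* A, RelInv φ → ∃! ψ : A →ₙ* A, RelInv ψ ∧
      φ.comp (ψ.comp φ) = φ ∧ ψ.comp (φ.comp ψ) = ψ) ∧
    ∃ Φ : {φ : A →ₙ* A // RelInv φ} ≃ {χ : A ≃. A // IsUIdealIso χ},
      (∀ φ ψ : {φ : A →ₙ* A // RelInv φ},
        (Φ ⟨φ.1.comp ψ.1, hclosed _ _ φ.2 ψ.2⟩).1 = (Φ ψ).1.trans (Φ φ).1) ∧
      (∀ (φ : {φ : A →ₙ* A // RelInv φ}) (a b : A),
        (Φ φ).1.toFun a = some b → b = φ.1 a) := by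
  have ctr : ∀ {e : A}, IsIdempotentElem e → ∀ a, e * a = a * e :=
    fun he a => idem_central hA hCl he a
  refine ⟨fun φ ψ hφ hψ => relInv_comp ctr hφ hψ, ?_, ?_⟩
  · intro φ hφ
    refine ⟨hφ.psi, ⟨relInv_psi hφ, comp_psi₁ hφ, comp_psi₂ hφ⟩, ?_⟩
    rintro t ⟨ht, ht1, ht2⟩
    set X := toPE φ hφ with hXdef
    have hY : RelInv hφ.psi := relInv_psi hφ
    have mk : ∀ (s : A →ₙ* A) (hs : RelInv s),
        φ.comp (s.comp φ) = φ → s.comp (φ.comp s) = s → toPE s hs = X.symm := by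
      intro s hs e1 e2
      have k1 : toPE (s.comp φ) (relInv_comp ctr hs hφ) = X.trans (toPE s hs) :=
        toPE_comp ctr hs hφ _
      have k2 : toPE (φ.comp (s.comp φ)) (relInv_comp ctr hφ (relInv_comp ctr hs hφ))
          = (X.trans (toPE s hs)).trans X := by
        rw [toPE_comp ctr hφ (relInv_comp ctr hs hφ), k1]
      have k3 : toPE (φ.comp (s.comp φ)) (relInv_comp ctr hφ (relInv_comp ctr hs hφ)) = X :=
        toPE_congr e1 _ hφ
      have k1' : toPE (φ.comp s) (relInv_comp ctr hφ hs) = (toPE s hs).trans X :=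
        toPE_comp ctr hφ hs _
      have k2' : toPE (s.comp (φ.comp s)) (relInv_comp ctr hs (relInv_comp ctr hφ hs))
          = ((toPE s hs).trans X).trans (toPE s hs) := by
        rw [toPE_comp ctr hs (relInv_comp ctr hφ hs), k1']
      have k3' : toPE (s.comp (φ.comp s)) (relInv_comp ctr hs (relInv_comp ctr hφ hs))
          = toPE s hs := toPE_congr e2 _ hs
      exact pequiv_uniq (k2.symm.trans k3) (k2'.symm.trans k3')
    have hTX : toPE t ht = X.symm := mk t ht ht1 ht2
    have hYX : toPE hφ.psi hY = X.symm := mk _ hY (comp_psi₁ hφ) (comp_psi₂ hφ)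
    exact toPE_inj ctr ht hY (hTX.trans hYX.symm)
  · refine ⟨Equiv.ofBijective
      (fun p => ⟨toPE p.1 p.2, toPE_isUIdealIso ctr p.2⟩) ⟨?_, ?_⟩, ?_, ?_⟩
    · rintro ⟨φ₁, h₁⟩ ⟨φ₂, h₂⟩ hkk
      have h' : toPE φ₁ h₁ = toPE φ₂ h₂ := congrArg Subtype.val hkk
      exact Subtype.ext (toPE_inj ctr h₁ h₂ h')
    · rintro ⟨χ, hχ⟩
      obtain ⟨φ, h, hh⟩ := toPE_surj ctr hχ
      exact ⟨⟨φ, h⟩, Subtype.ext hh⟩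
    · intro φ ψ
      exact toPE_comp ctr φ.2 ψ.2 _
    · intro φ a b hab
      exact toPE_some φ.2 hab
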